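/- Let I and O be disjoint finite sets of signals, H ⊆ I∪O with visible signals V = (I∪O)∖H, and L_φ, L_ψ ⊆ (2^(I∪O))^ω. Define Θ ⊆ (2^(I∪O) × 2^H)^ω as the set of all words w⊕u (where w ∈ (2^(I∪O))^ω and u ∈ (2^H)^ω, paired letterwise) such that w ∈ L_φ and, letting w' be the unique word with w'|_V = w|_V and w'|_H = u, it holds that (w ∈ L_ψ if and only if w' ∉ L_ψ). Then ⟨L_φ, L_ψ, H⟩ is realizable with certified privacy by a certifying transducer if and only if Θ is realizable by a transducer with input alphabet 2^I and output alphabet 2^O × 2^H (whose computation on input w_I = i₀·i₁·⋯ has j-th letter ⟨i_j ∪ o_j, u_j⟩, where ⟨o_j,u_j⟩ is its output after reading i₀⋯i_j). -/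

import Mathlib

open Set

/-- Infinite words over alphabet `A`. -/
abbrev Word (A : Type) := ℕ → A

/-- A transducer with input alphabet `Ain` and output alphabet `Aout`. -/
structure Transd (Ain Aout : Type) where
  S : Type
  fintype_S : Fintype S
  s0 : S
  η : S → Ain → S
  τ : S → Aout

def Transd.stateAt {Ain Aout : Type} (T : Transd Ain Aout) (w : Word Ain) : ℕ → T.S
  | 0 => T.η T.s0 (w 0)
  | n + 1 => T.η (T.stateAt w n) (w (n + 1))

def Transd.out {Ain Aout : Type} (T : Transd Ain Aout) (w : Word Ain) (j : ℕ) : Aout :=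
  T.τ (T.stateAt w j)

/-- A certifying transducer: an (I/O)-transducer with an additional labeling
`c : S → 2^H` producing the certificate. -/
structure CTrans (I O : Type) (H : Set (I ⊕ O)) where
  S : Type
  fintype_S : Fintype S
  s0 : S
  η : S → Set I → S
  τ : S → Set O
  c : S → Set H

def CTrans.stateAt {I O : Type} {H : Set (I ⊕ O)} (C : CTrans I O H)
    (w : Word (Set I)) : ℕ → C.S
  | 0 => C.η C.s0 (w 0)
  | n + 1 => C.η (C.stateAt w n) (w (n + 1))

/-- The (real) computation of a certifying transducer. -/
def CTrans.comp {I O : Type} {H : Set (I ⊕ O)} (C : CTrans I O H)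
    (wI : Word (Set I)) : Word (Set (I ⊕ O)) :=
  fun j => Sum.inl '' wI j ∪ Sum.inr '' C.τ (C.stateAt wI j)

/-- The certificate produced by a certifying transducer. -/
def CTrans.cert {I O : Type} {H : Set (I ⊕ O)} (C : CTrans I O H)
    (wI : Word (Set I)) : Word (Set H) :=
  fun j => C.c (C.stateAt wI j)

/-- The alternative computation: agrees with the real computation on the visible
signals and with the certificate on the hidden signals. -/
def CTrans.alt {I O : Type} {H : Set (I ⊕ O)} (C : CTrans I O H)
    (wI : Word (Set I)) : Word (Set (I ⊕ O)) :=
  fun j => (C.comp wI j ∩ Hᶜ) ∪ (Subtype.val '' C.cert wI j)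

/-- `C` realizes `⟨Lφ, Lψ, H⟩` with certified privacy. -/
def CTrans.certRealizes {I O : Type} {H : Set (I ⊕ O)} (C : CTrans I O H)
    (Lφ Lψ : Set (Word (Set (I ⊕ O)))) : Prop :=
  ∀ wI, C.comp wI ∈ Lφ ∧ (C.comp wI ∈ Lψ ↔ C.alt wI ∉ Lψ)

/-- The unique word agreeing with `w` on the visible signals and with `u` on the
hidden signals. -/
def altWord {I O : Type} (H : Set (I ⊕ O)) (w : Word (Set (I ⊕ O)))
    (u : Word (Set H)) : Word (Set (I ⊕ O)) :=
  fun j => (w j ∩ Hᶜ) ∪ (Subtype.val '' u j)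

/-- The language `Θ` over `2^(I∪O) × 2^H`: `w⊕u` belongs to `Θ` iff `w ∈ Lφ` and the
alternative word determined by `u` disagrees with `w` on the secret `Lψ`. -/
def Theta {I O : Type} (H : Set (I ⊕ O)) (Lφ Lψ : Set (Word (Set (I ⊕ O)))) :
    Set (Word (Set (I ⊕ O) × Set H)) :=
  {v | (fun j => (v j).1) ∈ Lφ ∧
    ((fun j => (v j).1) ∈ Lψ ↔
      altWord H (fun j => (v j).1) (fun j => (v j).2) ∉ Lψ)}

/-- The computation of a transducer with input alphabet `2^I` and output alphabet
`2^O × 2^H`, as a word over `2^(I∪O) × 2^H`. -/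
def pairComp {I O : Type} {H : Set (I ⊕ O)}
    (T : Transd (Set I) (Set O × Set H)) (wI : Word (Set I)) :
    Word (Set (I ⊕ O) × Set H) :=
  fun j => (Sum.inl '' wI j ∪ Sum.inr '' (T.out wI j).1, (T.out wI j).2)

/-- realizability with certified privacy coincides with realizability
of `Θ` by transducers with output alphabet `2^O × 2^H`. -/
theorem certified_privacy_iff_theta {I O : Type} [Fintype I] [Fintype O]
    (H : Set (I ⊕ O)) (Lφ Lψ : Set (Word (Set (I ⊕ O)))) :
    (∃ C : CTrans I O H, C.certRealizes Lφ Lψ) ↔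
    (∃ T : Transd (Set I) (Set O × Set H), ∀ wI, pairComp T wI ∈ Theta H Lφ Lψ) := by
  constructor
  · rintro ⟨C, hC⟩
    refine ⟨⟨C.S, C.fintype_S, C.s0, C.η, fun s => (C.τ s, C.c s)⟩, fun wI => ?_⟩
    set T : Transd (Set I) (Set O × Set H) :=
      ⟨C.S, C.fintype_S, C.s0, C.η, fun s => (C.τ s, C.c s)⟩ with hT
    have hst : ∀ n, T.stateAt wI n = C.stateAt wI n := by
      intro n; induction n with
      | zero => rfl
      | succ n ih => simp [Transd.stateAt, CTrans.stateAt, ih]; rfl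
    have h1 : (fun j => (pairComp T wI j).1) = C.comp wI := by
      funext j; simp [pairComp, Transd.out, hst, CTrans.comp, hT]; rfl
    have h2 : altWord H (fun j => (pairComp T wI j).1) (fun j => (pairComp T wI j).2)
        = C.alt wI := by
      funext j
      simp [altWord, pairComp, Transd.out, hst, CTrans.alt, CTrans.comp, CTrans.cert, hT]; rfl
    obtain ⟨hφ, hψ⟩ := hC wI
    rw [h1] at h2
    exact ⟨h1 ▸ hφ, by rw [h1, h2]; exact hψ⟩
  · rintro ⟨T, hT⟩
    refine ⟨⟨T.S, T.fintype_S, T.s0, T.η, fun s => (T.τ s).1, fun s => (T.τ s).2⟩,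
      fun wI => ?_⟩
    set C : CTrans I O H :=
      ⟨T.S, T.fintype_S, T.s0, T.η, fun s => (T.τ s).1, fun s => (T.τ s).2⟩ with hCdef
    have hst : ∀ n, C.stateAt wI n = T.stateAt wI n := by
      intro n; induction n with
      | zero => rfl
      | succ n ih => simp [Transd.stateAt, CTrans.stateAt, ih]; rfl
    have h1 : (fun j => (pairComp T wI j).1) = C.comp wI := by
      funext j; simp [pairComp, Transd.out, hst, CTrans.comp, hCdef]; rfl
    have h2 : altWord H (fun j => (pairComp T wI j).1) (fun j => (pairComp T wI j).2)
        = C.alt wI := by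
      funext j
      simp [altWord, pairComp, Transd.out, hst, CTrans.alt, CTrans.comp, CTrans.cert, hCdef]; rfl
    obtain ⟨hφ, hψ⟩ := hT wI
    rw [h1] at h2 hφ hψ
    rw [h2] at hψ
    exact ⟨hφ, hψ⟩
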